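/- Cantor's theorem holds in every extensive digraph: if D = (V, E) is an extensive digraph, then for no u, v ∈ V does SUR(v; u) hold. -/

import Mathlib

/-- The set of in-neighbors (`D`-elements) of `u` in the digraph with arrow relation `E`. -/
def inNbrs {V : Type*} (E : V → V → Prop) (u : V) : Set V := {v | E v u}

/-- `SIN E u v`: `u` is the unique vertex whose set of in-neighbors is `{v}`. -/
def SIN {V : Type*} (E : V → V → Prop) (u v : V) : Prop :=
  inNbrs E u = {v} ∧ ∀ w, inNbrs E w = {v} → w = u

/-- `DOU E u v w`: `u` is the unique vertex whose set of in-neighbors is `{v, w}`. -/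
def DOU {V : Type*} (E : V → V → Prop) (u v w : V) : Prop :=
  inNbrs E u = {v, w} ∧ ∀ t, inNbrs E t = {v, w} → t = u

/-- `OPA E u v w`: `u` is an ordered pair `⟨v, w⟩_D`. -/
def OPA {V : Type*} (E : V → V → Prop) (u v w : V) : Prop :=
  ∃ d e, SIN E d v ∧ DOU E e v w ∧ DOU E u d e

/-- `REL E u v`: `u` is a `D`-relation from `v` to `P(v)`. -/
def REL {V : Type*} (E : V → V → Prop) (u v : V) : Prop :=
  ∀ w ∈ inNbrs E u, ∃ w₁ ∈ inNbrs E v, ∃ w₂,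
    inNbrs E w₂ ⊆ inNbrs E v ∧ OPA E w w₁ w₂

/-- `FUN E u v`: `u` is a `D`-function from `v` to `P(v)`. -/
def FUN {V : Type*} (E : V → V → Prop) (u v : V) : Prop :=
  REL E u v ∧ ∀ w ∈ inNbrs E v, ∃! p, p ∈ inNbrs E u ∧ ∃ w', OPA E p w w'

/-- `SUR E u v`: `u` is a `D`-surjection from `v` to `P(v)`. -/
def SUR {V : Type*} (E : V → V → Prop) (u v : V) : Prop :=
  FUN E u v ∧ ∀ w', inNbrs E w' ⊆ inNbrs E v →
    ∃ p ∈ inNbrs E u, ∃ w, OPA E p w w'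

open FirstOrder Language

/-- A digraph `(V, E)` viewed as a structure in the language with a single
binary relation symbol (interpreted as `E`). -/
def digraphStructure {V : Type*} (E : V → V → Prop) : Language.graph.Structure V where
  RelMap | .adj => fun x => E (x 0) (x 1)

/-- The atomic formula `v_a ∈ v_b` (with de Bruijn variables `a`, `b`). -/
def memBF {k : ℕ} (a b : Fin k) : Language.graph.BoundedFormula Empty k :=
  Relations.boundedFormula₂ adj (&a) (&b)

/-- The instance of the axiom schema of specification determined by `n ≥ 1` and a
formula `ψ` with free variables among `v₁, …, v_{n+2}`:
`∀v₁ … ∀v_n ∀v_{n+1} ∃v_{n+3} ∀v_{n+2} ((v_{n+2} ∈ v_{n+3}) ↔ ((v_{n+2} ∈ v_{n+1}) ∧ ψ))`.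
Here the variable `v_t` for `1 ≤ t ≤ n+1` is the de Bruijn variable `t - 1`, while
`v_{n+3}` is de Bruijn variable `n+1` and `v_{n+2}` is de Bruijn variable `n+2`. -/
def specSentence (n : ℕ) (ψ : Language.graph.Formula (Fin (n + 2))) :
    Language.graph.Sentence :=
  let g : Fin (n + 2) → Empty ⊕ Fin (n + 3) := fun t =>
    if _ : (t : ℕ) < n + 1 then Sum.inr ⟨(t : ℕ), by omega⟩
    else Sum.inr ⟨n + 2, by omega⟩
  let ψ' : Language.graph.BoundedFormula Empty (n + 3) := BoundedFormula.relabel g ψ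
  let body : Language.graph.BoundedFormula Empty (n + 3) :=
    BoundedFormula.iff (memBF ⟨n + 2, by omega⟩ ⟨n + 1, by omega⟩)
      ((memBF ⟨n + 2, by omega⟩ ⟨n, by omega⟩) ⊓ ψ')
  BoundedFormula.alls (BoundedFormula.ex (BoundedFormula.all body))

/-- The axiom schema of specification holds in the digraph `(V, E)`. -/
def Extensive {V : Type*} (E : V → V → Prop) : Prop :=
  ∀ n : ℕ, 1 ≤ n → ∀ ψ : Language.graph.Formula (Fin (n + 2)),
    letI := digraphStructure E
    (specSentence n ψ).Realize V

section Semantic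

variable {V : Type} {E : V → V → Prop}

/-- Ordered pairs determine their components (at the vertex level). -/
lemma OPA_inj {p a b a' b' : V} (h : OPA E p a b) (h' : OPA E p a' b') :
    a = a' ∧ b = b' := by
  obtain ⟨d, e, hd, he, hp⟩ := h
  obtain ⟨d', e', hd', he', hp'⟩ := h'
  have hpair : ({d, e} : Set V) = {d', e'} := by rw [← hp.1, ← hp'.1]
  rcases Set.pair_eq_pair_iff.mp hpair with ⟨hdd, hee⟩ | ⟨hde, hed⟩
  · subst hdd; subst hee
    have h1 : ({a} : Set V) = {a'} := by rw [← hd.1, ← hd'.1]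
    have haa : a = a' := Set.singleton_eq_singleton_iff.mp h1
    subst haa
    have h2 : ({a, b} : Set V) = {a, b'} := by rw [← he.1, ← he'.1]
    rcases Set.pair_eq_pair_iff.mp h2 with ⟨_, hbb⟩ | ⟨hab, hba⟩
    · exact ⟨rfl, hbb⟩
    · exact ⟨rfl, hba.trans hab⟩
  · subst hde; subst hed
    have h1 : ({a} : Set V) = {a', b'} := by rw [← hd.1, ← he'.1]
    have h2 : ({a, b} : Set V) = {a'} := by rw [← he.1, ← hd'.1]
    have ha' : a' = a := by
      have : a' ∈ ({a} : Set V) := by rw [h1]; exact Set.mem_insert _ _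
      exact this
    have hb' : b' = a := by
      have : b' ∈ ({a', b'} : Set V) := Set.mem_insert_of_mem _ rfl
      rw [← h1] at this; exact Set.mem_singleton_iff.mp this
    have hb : b = a := by
      have : b ∈ ({a, b} : Set V) := Set.mem_insert_of_mem _ rfl
      rw [h2] at this
      exact this.trans ha'
    exact ⟨ha'.symm, by rw [hb, hb']⟩

/-- The semantic diagonal predicate. -/
def Diag (E : V → V → Prop) (v w : V) : Prop :=
  ∀ p' w'', E p' v → OPA E p' w w'' → ¬ E w w''

/-- Cantor's argument, given a vertex realizing the diagonal set. -/
lemma cantor_core {u v : V} (hsur : SUR E v u)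
    (b : V) (hb : ∀ x, E x b ↔ (E x u ∧ Diag E v x)) : False := by
  obtain ⟨⟨hrel, hfun⟩, hsurj⟩ := hsur
  have hbsub : inNbrs E b ⊆ inNbrs E u := fun x hx => ((hb x).mp hx).1
  obtain ⟨p, hp, w, hOPA⟩ := hsurj b hbsub
  obtain ⟨w₁, hw₁u, w₂, _, hOPA'⟩ := hrel p hp
  obtain ⟨hww₁, hbw₂⟩ := OPA_inj hOPA hOPA'
  have hwu : E w u := by rw [hww₁]; exact hw₁u
  by_cases hwb : E w b
  · exact ((hb w).mp hwb).2 p b hp hOPA hwb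
  · have hndiag : ¬ Diag E v w := fun hd => hwb ((hb w).mpr ⟨hwu, hd⟩)
    simp only [Diag, not_forall, not_not] at hndiag
    obtain ⟨p', w'', hp'v, hOPA'', hww''⟩ := hndiag
    obtain ⟨q, _, hq⟩ := hfun w hwu
    have hpq : p = q := hq p ⟨hp, b, hOPA⟩
    have hp'q : p' = q := hq p' ⟨hp'v, w'', hOPA''⟩
    rw [hp'q, ← hpq] at hOPA''
    have := (OPA_inj hOPA hOPA'').2
    rw [← this] at hww''
    exact hwb hww''

end Semantic
section FormulaPart

open FirstOrder Language

variable {V : Type} {E : V → V → Prop}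

/-- Variable term. -/
abbrev vr {k : ℕ} (a : Fin 3 ⊕ Fin k) : Language.graph.Term (Fin 3 ⊕ Fin k) := Term.var a

/-- Membership formula between two variables. -/
def memF {k : ℕ} (a b : Fin 3 ⊕ Fin k) : Language.graph.BoundedFormula (Fin 3) k :=
  Relations.boundedFormula₂ adj (vr a) (vr b)

/-- Equality formula between two variables. -/
def eqF {k : ℕ} (a b : Fin 3 ⊕ Fin k) : Language.graph.BoundedFormula (Fin 3) k :=
  Term.bdEqual (vr a) (vr b)

/-- Lift a variable index into a deeper context. -/
def lf {k : ℕ} (a : Fin 3 ⊕ Fin k) : Fin 3 ⊕ Fin (k + 1) := Sum.map id Fin.castSucc a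

/-- The newest bound variable. -/
def nv {k : ℕ} : Fin 3 ⊕ Fin (k + 1) := Sum.inr (Fin.last k)

@[simp] lemma ev_lf {k : ℕ} (val : Fin 3 → V) (xs : Fin k → V) (x : V) (a : Fin 3 ⊕ Fin k) :
    Sum.elim val (Fin.snoc xs x) (lf a) = Sum.elim val xs a := by
  cases a with
  | inl i => rfl
  | inr i => simp [lf, Fin.snoc_castSucc]

@[simp] lemma ev_nv {k : ℕ} (val : Fin 3 → V) (xs : Fin k → V) (x : V) :
    Sum.elim val (Fin.snoc xs x) (nv : Fin 3 ⊕ Fin (k + 1)) = x := by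
  simp [nv]

lemma realize_memF {k : ℕ} (a b : Fin 3 ⊕ Fin k) (val : Fin 3 → V) (xs : Fin k → V) :
    (letI := digraphStructure E; (memF a b).Realize val xs) ↔
      E (Sum.elim val xs a) (Sum.elim val xs b) := by
  letI := digraphStructure E
  simp only [memF, BoundedFormula.realize_rel₂, Term.realize_var]
  rfl

lemma realize_eqF {k : ℕ} (a b : Fin 3 ⊕ Fin k) (val : Fin 3 → V) (xs : Fin k → V) :
    (letI := digraphStructure E; (eqF a b).Realize val xs) ↔
      Sum.elim val xs a = Sum.elim val xs b := by
  letI := digraphStructure E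
  simp only [eqF, BoundedFormula.realize_bdEqual, Term.realize_var]

end FormulaPart
section FormulaPart2

open FirstOrder Language

variable {V : Type} {E : V → V → Prop}

/-- Formula expressing `SIN`. -/
def SINf {k : ℕ} (d a : Fin 3 ⊕ Fin k) : Language.graph.BoundedFormula (Fin 3) k :=
  (BoundedFormula.all ((memF nv (lf d)).iff (eqF nv (lf a)))) ⊓
  (BoundedFormula.all
    ((BoundedFormula.all ((memF nv (lf nv)).iff (eqF nv (lf (lf a))))).imp (eqF nv (lf d))))

/-- Formula expressing `DOU`. -/
def DOUf {k : ℕ} (e a b : Fin 3 ⊕ Fin k) : Language.graph.BoundedFormula (Fin 3) k :=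
  (BoundedFormula.all ((memF nv (lf e)).iff ((eqF nv (lf a)) ⊔ (eqF nv (lf b))))) ⊓
  (BoundedFormula.all
    ((BoundedFormula.all ((memF nv (lf nv)).iff
      ((eqF nv (lf (lf a))) ⊔ (eqF nv (lf (lf b)))))).imp (eqF nv (lf e))))

lemma inNbrs_eq_singleton_iff {u a : V} : inNbrs E u = {a} ↔ ∀ x, E x u ↔ x = a := by
  simp [inNbrs, Set.ext_iff]

lemma inNbrs_eq_pair_iff {u a b : V} :
    inNbrs E u = {a, b} ↔ ∀ x, E x u ↔ (x = a ∨ x = b) := by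
  simp [inNbrs, Set.ext_iff]

lemma realize_SINf {k : ℕ} (d a : Fin 3 ⊕ Fin k) (val : Fin 3 → V) (xs : Fin k → V) :
    (letI := digraphStructure E; (SINf d a).Realize val xs) ↔
      SIN E (Sum.elim val xs d) (Sum.elim val xs a) := by
  letI := digraphStructure E
  simp only [SINf, SIN, BoundedFormula.realize_inf, BoundedFormula.realize_all,
    BoundedFormula.realize_iff, BoundedFormula.realize_imp, realize_memF, realize_eqF,
    ev_lf, ev_nv, inNbrs_eq_singleton_iff]

lemma realize_DOUf {k : ℕ} (e a b : Fin 3 ⊕ Fin k) (val : Fin 3 → V) (xs : Fin k → V) :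
    (letI := digraphStructure E; (DOUf e a b).Realize val xs) ↔
      DOU E (Sum.elim val xs e) (Sum.elim val xs a) (Sum.elim val xs b) := by
  letI := digraphStructure E
  simp only [DOUf, DOU, BoundedFormula.realize_inf, BoundedFormula.realize_all,
    BoundedFormula.realize_iff, BoundedFormula.realize_imp, BoundedFormula.realize_sup,
    realize_memF, realize_eqF, ev_lf, ev_nv, inNbrs_eq_pair_iff]

/-- Formula expressing `OPA`. -/
def OPAf {k : ℕ} (p a b : Fin 3 ⊕ Fin k) : Language.graph.BoundedFormula (Fin 3) k :=
  BoundedFormula.ex (BoundedFormula.ex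
    ((SINf (lf nv) (lf (lf a))) ⊓ (DOUf nv (lf (lf a)) (lf (lf b))) ⊓
      (DOUf (lf (lf p)) (lf nv) nv)))

lemma realize_OPAf {k : ℕ} (p a b : Fin 3 ⊕ Fin k) (val : Fin 3 → V) (xs : Fin k → V) :
    (letI := digraphStructure E; (OPAf p a b).Realize val xs) ↔
      OPA E (Sum.elim val xs p) (Sum.elim val xs a) (Sum.elim val xs b) := by
  letI := digraphStructure E
  simp only [OPAf, OPA, BoundedFormula.realize_ex, BoundedFormula.realize_inf,
    realize_SINf, realize_DOUf, ev_lf, ev_nv]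
  tauto

/-- The diagonal formula. -/
def psiF : Language.graph.Formula (Fin 3) :=
  BoundedFormula.all (BoundedFormula.all
    (((memF (lf nv) (Sum.inl 0)) ⊓ (OPAf (lf nv) (Sum.inl 2) nv)).imp
      ((memF (Sum.inl 2) nv).not)))

lemma realize_psiF (val : Fin 3 → V) :
    (letI := digraphStructure E; psiF.Realize val) ↔ Diag E (val 0) (val 2) := by
  letI := digraphStructure E
  have : ∀ xs : Fin 0 → V,
      (BoundedFormula.all (BoundedFormula.all
        (((memF (lf nv) (Sum.inl 0)) ⊓ (OPAf (lf nv) (Sum.inl 2) nv)).imp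
          ((memF (Sum.inl 2) nv).not)))).Realize val xs ↔ Diag E (val 0) (val 2) := by
    intro xs
    simp only [Diag, BoundedFormula.realize_all, BoundedFormula.realize_imp,
      BoundedFormula.realize_inf, BoundedFormula.realize_not,
      realize_memF, realize_OPAf, ev_lf, ev_nv, Sum.elim_inl]
    tauto
  exact this _

end FormulaPart2
section SpecPart
open FirstOrder Language

variable {V : Type} {E : V → V → Prop}

lemma spec_extract (ψ : Language.graph.Formula (Fin 3))
    (h : letI := digraphStructure E; (specSentence 1 ψ).Realize V) (a0 a1 : V) :
    ∃ b : V, ∀ x : V, E x b ↔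
      (E x a1 ∧ (letI := digraphStructure E; ψ.Realize ![a0, a1, x])) := by
  letI := digraphStructure E
  unfold specSentence at h
  simp only [Sentence.Realize, BoundedFormula.realize_alls, BoundedFormula.realize_ex,
    BoundedFormula.realize_all, BoundedFormula.realize_iff, BoundedFormula.realize_inf,
    BoundedFormula.realize_relabel, memBF, BoundedFormula.realize_rel₂, Term.realize_var] at h
  obtain ⟨b, hb⟩ := h ![a0, a1]
  refine ⟨b, fun x => ?_⟩
  have hx := hb x
  convert hx using 2
  · rfl
  · rfl
  · show Formula.Realize ψ (_ : Fin 3 → V) ↔ _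
    unfold Formula.Realize
    refine iff_of_eq ?_
    congr 1
    · funext t; fin_cases t <;> rfl
    · funext i; exact i.elim0

end SpecPart
/-- Cantor's theorem holds in every extensive digraph: if the
axiom schema of specification holds in the digraph `D = (V, E)`, then for no
`u, v ∈ V` does `SUR(v; u)` hold. -/
theorem cantor_of_extensive {V : Type} [Nonempty V] (E : V → V → Prop)
    (hext : Extensive E) : ∀ u v : V, ¬ SUR E v u := by
  intro u v hsur
  have hspec := hext 1 le_rfl psiF
  obtain ⟨b, hb⟩ := spec_extract psiF hspec v u
  apply cantor_core hsur b
  intro x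
  rw [hb x]
  have := realize_psiF (E := E) ![v, u, x]
  simp only [Matrix.cons_val_zero, Matrix.cons_val_two, Matrix.tail_cons,
    Matrix.head_cons] at this
  rw [this]
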